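/- Let λ ∈ ℝ and β = (1 − λ)/3. For (z,w,X) ∈ ℝ³ with p(z,w,X) := 1 − 3wX + 3zX² − X³ > 0, set Q(z,w,X) = p(z,w,X)^β. Then: (i) at every point of the open set {p > 0}, (w − z²)∂²_z Q + (1 − zw)∂_z∂_w Q + (z − w²)∂²_w Q − λz∂_z Q − λw∂_w Q = −λX ∂_X Q − X² ∂²_X Q; (ii) for every (z,w) ∈ ℝ² and all X ≠ Y with p(z,w,X) > 0 and p(z,w,Y) > 0, writing Q(X) for Q(z,w,X) and Q′(X) for ∂_X Q(z,w,X), one has Γ(Q(X), Q(Y)) = (XY/2)( Q′(X)Q′(Y) + 3β (Q′(X)Q(Y) − Q(X)Q′(Y))/(X − Y) ), where Γ(f,g) = (w − z²)(∂_z f)(∂_z g) + ((1 − zw)/2)((∂_z f)(∂_w g) + (∂_w f)(∂_z g)) + (z − w²)(∂_w f)(∂_w g) is computed in the variables (z,w) at fixed X, Y. -/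

import Mathlib

noncomputable section


/-- Partial derivative in the first variable of a function of two real variables. -/
def pz (f : ℝ → ℝ → ℝ) (z w : ℝ) : ℝ := deriv (fun t => f t w) z

/-- Partial derivative in the second variable of a function of two real variables. -/
def pw (f : ℝ → ℝ → ℝ) (z w : ℝ) : ℝ := deriv (fun t => f z t) w

/-- The carré du champ `Γ` of the deltoid model, in the real variables `(z,w)`. -/
def Gam (f g : ℝ → ℝ → ℝ) (z w : ℝ) : ℝ :=
  (w - z ^ 2) * pz f z w * pz g z w
    + (1 - z * w) / 2 * (pz f z w * pw g z w + pw f z w * pz g z w)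
    + (z - w ^ 2) * pw f z w * pw g z w

/-- The cubic `p(z,w,X) = 1 − 3wX + 3zX² − X³`. -/
def pcub (z w X : ℝ) : ℝ := 1 - 3 * w * X + 3 * z * X ^ 2 - X ^ 3

lemma hAff (u v γ x : ℝ) (h : 0 < u * x + v) :
    HasDerivAt (fun t : ℝ => (u * t + v) ^ γ) (u * γ * (u * x + v) ^ (γ - 1)) x := by
  have h1 : HasDerivAt (fun t : ℝ => u * t + v) u x := by
    simpa using ((hasDerivAt_id x).const_mul u).add_const v
  simpa using h1.rpow_const (Or.inl h.ne')

lemma dAff (u v γ x : ℝ) (h : 0 < u * x + v) :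
    deriv (fun t : ℝ => (u * t + v) ^ γ) x = u * γ * (u * x + v) ^ (γ - 1) :=
  (hAff u v γ x h).deriv

lemma dAff' (c u v γ x : ℝ) (h : 0 < u * x + v) :
    deriv (fun t : ℝ => c * (u * t + v) ^ γ) x = c * (u * γ * (u * x + v) ^ (γ - 1)) :=
  ((hAff u v γ x h).const_mul c).deriv

lemma openAff (u v : ℝ) : IsOpen {t : ℝ | 0 < u * t + v} :=
  isOpen_lt continuous_const (by continuity)

lemma d2Aff (u v γ x : ℝ) (h : 0 < u * x + v) :
    deriv (fun t : ℝ => deriv (fun s : ℝ => (u * s + v) ^ γ) t) x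
      = u ^ 2 * γ * (γ - 1) * (u * x + v) ^ (γ - 2) := by
  have hev : (fun t : ℝ => deriv (fun s : ℝ => (u * s + v) ^ γ) t)
      =ᶠ[nhds x] (fun t : ℝ => u * γ * (u * t + v) ^ (γ - 1)) := by
    filter_upwards [(openAff u v).mem_nhds h] with t ht using dAff u v γ t ht
  rw [hev.deriv_eq, dAff' (u * γ) u v (γ - 1) x h]
  have e : γ - 1 - 1 = γ - 2 := by ring
  rw [e]; ring

lemma hbz (w X : ℝ) : ∀ t : ℝ, pcub t w X = 3 * X ^ 2 * t + (1 - 3 * w * X - X ^ 3) := by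
  intro t; unfold pcub; ring

lemma hbw (z X : ℝ) : ∀ t : ℝ, pcub z t X = (-(3 * X)) * t + (1 + 3 * z * X ^ 2 - X ^ 3) := by
  intro t; unfold pcub; ring

lemma dz' (g z w X : ℝ) (h : 0 < pcub z w X) :
    deriv (fun t : ℝ => pcub t w X ^ g) z = 3 * X ^ 2 * g * pcub z w X ^ (g - 1) := by
  have hf : (fun t : ℝ => pcub t w X ^ g)
      = (fun t : ℝ => (3 * X ^ 2 * t + (1 - 3 * w * X - X ^ 3)) ^ g) := by
    funext t; rw [hbz w X t]
  rw [hf, dAff _ _ _ _ (by rw [← hbz w X z]; exact h), ← hbz w X z]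

lemma dw' (g z w X : ℝ) (h : 0 < pcub z w X) :
    deriv (fun t : ℝ => pcub z t X ^ g) w = (-(3 * X)) * g * pcub z w X ^ (g - 1) := by
  have hf : (fun t : ℝ => pcub z t X ^ g)
      = (fun t : ℝ => ((-(3 * X)) * t + (1 + 3 * z * X ^ 2 - X ^ 3)) ^ g) := by
    funext t; rw [hbw z X t]
  rw [hf, dAff _ _ _ _ (by rw [← hbw z X w]; exact h), ← hbw z X w]

lemma dzz' (g z w X : ℝ) (h : 0 < pcub z w X) :
    deriv (fun t : ℝ => deriv (fun s : ℝ => pcub s w X ^ g) t) z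
      = 9 * X ^ 4 * g * (g - 1) * pcub z w X ^ (g - 2) := by
  have hf : (fun s : ℝ => pcub s w X ^ g)
      = (fun s : ℝ => (3 * X ^ 2 * s + (1 - 3 * w * X - X ^ 3)) ^ g) := by
    funext s; rw [hbz w X s]
  rw [hf, d2Aff _ _ _ _ (by rw [← hbz w X z]; exact h), ← hbz w X z]; ring

lemma dww' (g z w X : ℝ) (h : 0 < pcub z w X) :
    deriv (fun t : ℝ => deriv (fun s : ℝ => pcub z s X ^ g) t) w
      = 9 * X ^ 2 * g * (g - 1) * pcub z w X ^ (g - 2) := by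
  have hf : (fun s : ℝ => pcub z s X ^ g)
      = (fun s : ℝ => ((-(3 * X)) * s + (1 + 3 * z * X ^ 2 - X ^ 3)) ^ g) := by
    funext s; rw [hbw z X s]
  rw [hf, d2Aff _ _ _ _ (by rw [← hbw z X w]; exact h), ← hbw z X w]; ring

lemma dzw' (g z w X : ℝ) (h : 0 < pcub z w X) :
    deriv (fun t : ℝ => deriv (fun s : ℝ => pcub t s X ^ g) w) z
      = -(9 * X ^ 3) * g * (g - 1) * pcub z w X ^ (g - 2) := by
  have hO : IsOpen {t : ℝ | 0 < pcub t w X} := by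
    simp only [hbz w X]; exact openAff _ _
  have hev : (fun t : ℝ => deriv (fun s : ℝ => pcub t s X ^ g) w) =ᶠ[nhds z]
      (fun t : ℝ => ((-(3 * X)) * g) * (3 * X ^ 2 * t + (1 - 3 * w * X - X ^ 3)) ^ (g - 1)) := by
    filter_upwards [hO.mem_nhds h] with t ht
    rw [dw' g t w X ht, hbz w X t]
  rw [hev.deriv_eq, dAff' _ _ _ _ _ (by rw [← hbz w X z]; exact h), ← hbz w X z]
  have e : g - 1 - 1 = g - 2 := by ring
  rw [e]; ring

lemma hcubX (z w X : ℝ) :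
    HasDerivAt (fun t : ℝ => pcub z w t) (-(3 * w) + 6 * z * X - 3 * X ^ 2) X := by
  unfold pcub
  have h := (((hasDerivAt_const X (1 : ℝ)).sub
      ((hasDerivAt_id X).const_mul (3 * w))).add
      ((hasDerivAt_pow 2 X).const_mul (3 * z))).sub (hasDerivAt_pow 3 X)
  refine h.congr_deriv ?_
  push_cast; ring

lemma dX' (g z w X : ℝ) (h : 0 < pcub z w X) :
    deriv (fun t : ℝ => pcub z w t ^ g) X
      = (-(3 * w) + 6 * z * X - 3 * X ^ 2) * g * pcub z w X ^ (g - 1) :=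
  ((hcubX z w X).rpow_const (Or.inl h.ne')).deriv

lemma d2X' (g z w X : ℝ) (h : 0 < pcub z w X) :
    deriv (fun t : ℝ => deriv (fun s : ℝ => pcub z w s ^ g) t) X
      = (6 * z - 6 * X) * g * pcub z w X ^ (g - 1)
        + (-(3 * w) + 6 * z * X - 3 * X ^ 2) ^ 2 * g * (g - 1) * pcub z w X ^ (g - 2) := by
  have hO : IsOpen {t : ℝ | 0 < pcub z w t} := by
    apply isOpen_lt continuous_const
    unfold pcub; continuity
  have hev : (fun t : ℝ => deriv (fun s : ℝ => pcub z w s ^ g) t) =ᶠ[nhds X]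
      (fun t : ℝ => (-(3 * w) + 6 * z * t - 3 * t ^ 2) * g * pcub z w t ^ (g - 1)) := by
    filter_upwards [hO.mem_nhds h] with t ht using dX' g z w t ht
  rw [hev.deriv_eq]
  have h1 : HasDerivAt (fun t : ℝ => (-(3 * w) + 6 * z * t - 3 * t ^ 2) * g)
      ((6 * z - 6 * X) * g) X := by
    have h0 : HasDerivAt (fun t : ℝ => -(3 * w) + 6 * z * t - 3 * t ^ 2) (6 * z - 6 * X) X := by
      have := ((hasDerivAt_const X (-(3 * w))).add
          ((hasDerivAt_id X).const_mul (6 * z))).sub ((hasDerivAt_pow 2 X).const_mul 3)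
      refine this.congr_deriv ?_
      push_cast; ring
    exact h0.mul_const g
  have h2 : HasDerivAt (fun t : ℝ => pcub z w t ^ (g - 1))
      ((-(3 * w) + 6 * z * X - 3 * X ^ 2) * (g - 1) * pcub z w X ^ (g - 1 - 1)) X :=
    (hcubX z w X).rpow_const (Or.inl h.ne')
  rw [HasDerivAt.deriv (f := fun t => (-(3 * w) + 6 * z * t - 3 * t ^ 2) * g * pcub z w t ^ (g - 1)) (h1.mul h2)]
  have e : g - 1 - 1 = g - 2 := by ring
  rw [e]; ring


theorem stmt_16 (lam β : ℝ) (hβ : β = (1 - lam) / 3)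
    (Q : ℝ → ℝ → ℝ → ℝ) (hQ : ∀ z w X, Q z w X = pcub z w X ^ β) :
    (∀ z w X : ℝ, 0 < pcub z w X →
      (w - z ^ 2) * pz (pz (fun a b => Q a b X)) z w
        + (1 - z * w) * pz (pw (fun a b => Q a b X)) z w
        + (z - w ^ 2) * pw (pw (fun a b => Q a b X)) z w
        - lam * z * pz (fun a b => Q a b X) z w
        - lam * w * pw (fun a b => Q a b X) z w
      = -lam * X * deriv (fun t => Q z w t) X
        - X ^ 2 * deriv (fun t => deriv (fun s => Q z w s) t) X) ∧
    (∀ z w X Y : ℝ, X ≠ Y → 0 < pcub z w X → 0 < pcub z w Y →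
      Gam (fun a b => Q a b X) (fun a b => Q a b Y) z w
        = X * Y / 2 *
            (deriv (fun t => Q z w t) X * deriv (fun t => Q z w t) Y
              + 3 * β * (deriv (fun t => Q z w t) X * Q z w Y
                  - Q z w X * deriv (fun t => Q z w t) Y) / (X - Y))) := by
  refine ⟨?_, ?_⟩
  · intro z w X h
    simp only [hQ, pz, pw]
    rw [dzz' β z w X h, dzw' β z w X h, dww' β z w X h, dz' β z w X h, dw' β z w X h,
      dX' β z w X h, d2X' β z w X h]
    have hBA : pcub z w X ^ (β - 1) = pcub z w X ^ (β - 2) * pcub z w X := by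
      rw [show β - 1 = (β - 2) + 1 by ring, Real.rpow_add_one h.ne']
    simp only [hBA]
    generalize pcub z w X ^ (β - 2) = A
    subst hβ
    unfold pcub
    ring
  · intro z w X Y hXY hpX hpY
    have hXY' : X - Y ≠ 0 := sub_ne_zero_of_ne hXY
    simp only [hQ, Gam, pz, pw]
    rw [dz' β z w X hpX, dw' β z w X hpX, dz' β z w Y hpY, dw' β z w Y hpY,
      dX' β z w X hpX, dX' β z w Y hpY]
    have e1 : pcub z w X ^ β = pcub z w X ^ (β - 1) * pcub z w X := by
      conv_lhs => rw [show β = (β - 1) + 1 by ring]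
      rw [Real.rpow_add_one hpX.ne']
    have e2 : pcub z w Y ^ β = pcub z w Y ^ (β - 1) * pcub z w Y := by
      conv_lhs => rw [show β = (β - 1) + 1 by ring]
      rw [Real.rpow_add_one hpY.ne']
    simp only [e1, e2]
    generalize pcub z w X ^ (β - 1) = BX
    generalize pcub z w Y ^ (β - 1) = BY
    unfold pcub
    field_simp
    ring
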